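/- Let X follow an elliptical distribution on ℝ^M with density p(x) = g((x-μ)^T Σ^{-1} (x-μ)), where Σ is positive definite and g is differentiable, non-negative, and p integrates to 1. If p is MTP₂, i.e., p(x)p(y) ≤ p(x ∧ y)p(x ∨ y) for all x, y (with ∧, ∨ coordinatewise min and max), then Σ^{-1} is an M-matrix, i.e., (Σ^{-1})_{ij} ≤ 0 for all i ≠ j. -/

import Mathlib

open MeasureTheory Matrix

lemma aux_one_step (g : ℝ → ℝ) (A B C : ℝ) (hA : 0 < A) (hB : 0 < B) (hC : 0 < C)
    (hstep : ∀ s t : ℝ, 0 ≤ s → 0 ≤ t →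
      g (s^2*A + t^2*B - 2*(s*t*C)) ≤ g (s^2*A + t^2*B + 2*(s*t*C)))
    (v w : ℝ) (hv : 0 ≤ v) (hvw : v ≤ w)
    (hcond : Real.sqrt (A*B) * (w - v) ≤ C*(v+w)) : g v ≤ g w := by
  obtain ⟨R, hR⟩ : ∃ R, R = Real.sqrt (A*B) := ⟨_, rfl⟩
  rw [← hR] at hcond
  have hRpos : 0 < R := hR ▸ Real.sqrt_pos.2 (by positivity)
  obtain ⟨u, hu⟩ : ∃ u : ℝ, u = (v+w)/2 := ⟨_, rfl⟩
  obtain ⟨m, hm⟩ : ∃ m : ℝ, m = (w-v)*R/(4*C) := ⟨_, rfl⟩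
  have hm0 : 0 ≤ m := by rw [hm]; apply div_nonneg (by nlinarith) (by linarith)
  have h1 : 0 ≤ u - 2*m := by
    have h4C : (0:ℝ) < 4*C := by linarith
    have : 2*m ≤ u := by
      calc 2*m = (w-v)*R*2/(4*C) := by rw [hm]; ring
        _ ≤ (v+w)/2 := by
            rw [div_le_div_iff₀ h4C two_pos]; nlinarith [hcond]
        _ = u := hu.symm
    linarith
  have h2 : 0 ≤ u + 2*m := by linarith
  obtain ⟨P, hP⟩ : ∃ P, P = Real.sqrt (u + 2*m) := ⟨_, rfl⟩
  obtain ⟨Q, hQ⟩ : ∃ Q, Q = Real.sqrt (u - 2*m) := ⟨_, rfl⟩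
  have hP0 : 0 ≤ P := hP ▸ Real.sqrt_nonneg _
  have hQ0 : 0 ≤ Q := hQ ▸ Real.sqrt_nonneg _
  have hP2 : P^2 = u + 2*m := by rw [hP]; exact Real.sq_sqrt h2
  have hQ2 : Q^2 = u - 2*m := by rw [hQ]; exact Real.sq_sqrt h1
  have hQP : Q ≤ P := by rw [hP, hQ]; exact Real.sqrt_le_sqrt (by linarith)
  obtain ⟨pp, hpp⟩ : ∃ pp : ℝ, pp = (P+Q)/2 := ⟨_, rfl⟩
  obtain ⟨qq, hqq⟩ : ∃ qq : ℝ, qq = (P-Q)/2 := ⟨_, rfl⟩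
  have hpp0 : 0 ≤ pp := by rw [hpp]; positivity
  have hqq0 : 0 ≤ qq := by rw [hqq]; linarith
  have hsA : 0 < Real.sqrt A := Real.sqrt_pos.2 hA
  have hsB : 0 < Real.sqrt B := Real.sqrt_pos.2 hB
  obtain ⟨s, hs⟩ : ∃ s : ℝ, s = pp / Real.sqrt A := ⟨_, rfl⟩
  obtain ⟨t, ht⟩ : ∃ t : ℝ, t = qq / Real.sqrt B := ⟨_, rfl⟩
  have hs0 : 0 ≤ s := by rw [hs]; positivity
  have ht0 : 0 ≤ t := by rw [ht]; positivity
  have hsq : s^2*A = pp^2 := by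
    rw [hs, div_pow, Real.sq_sqrt hA.le]; field_simp
  have htq : t^2*B = qq^2 := by
    rw [ht, div_pow, Real.sq_sqrt hB.le]; field_simp
  have hRAB : Real.sqrt A * Real.sqrt B = R := by
    rw [hR]; exact (Real.sqrt_mul hA.le B).symm
  have hppqq : pp*qq = m := by
    have h5 : pp*qq = (P^2 - Q^2)/4 := by rw [hpp, hqq]; ring
    rw [h5, hP2, hQ2]; ring
  have hstC : s*t*C = (w-v)/4 := by
    rw [hs, ht, div_mul_div_comm, hRAB, hppqq, hm]
    field_simp
  have hsum : s^2*A + t^2*B = u := by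
    rw [hsq, htq, hpp, hqq]
    linear_combination (hP2 + hQ2) / 2
  have hfin := hstep s t hs0 ht0
  rw [hsum, hstC] at hfin
  have e1 : u - 2*((w-v)/4) = v := by rw [hu]; ring
  have e2 : u + 2*((w-v)/4) = w := by rw [hu]; ring
  rwa [e1, e2] at hfin

lemma aux_mono (g : ℝ → ℝ) (A B C : ℝ) (hA : 0 < A) (hB : 0 < B) (hC : 0 < C)
    (hstep : ∀ s t : ℝ, 0 ≤ s → 0 ≤ t →
      g (s^2*A + t^2*B - 2*(s*t*C)) ≤ g (s^2*A + t^2*B + 2*(s*t*C)))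
    (v w : ℝ) (hv : 0 < v) (hvw : v ≤ w) : g v ≤ g w := by
  obtain ⟨R, hR⟩ : ∃ R, R = Real.sqrt (A*B) := ⟨_, rfl⟩
  have hRpos : 0 < R := hR ▸ Real.sqrt_pos.2 (by positivity)
  obtain ⟨β, hβ⟩ : ∃ β : ℝ, β = 1 + C/R := ⟨_, rfl⟩
  have hβ1 : 1 < β := by
    have h0 : 0 < C/R := by positivity
    rw [hβ]; linarith
  have claim : ∀ n : ℕ, ∀ w, v ≤ w → w ≤ β^n * v → g v ≤ g w := by
    intro n
    induction n with
    | zero =>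
      intro w h1 h2
      rw [pow_zero, one_mul] at h2
      rw [le_antisymm h2 h1]
    | succ n ih =>
      intro w h1 h2
      by_cases hcase : w ≤ β^n * v
      · exact ih w h1 hcase
      · push_neg at hcase
        obtain ⟨w', hw'⟩ : ∃ w' : ℝ, w' = β^n * v := ⟨_, rfl⟩
        rw [← hw'] at hcase
        have hβn : 1 ≤ β^n := one_le_pow₀ hβ1.le
        have hw'v : v ≤ w' := by rw [hw']; nlinarith
        have hgw' : g v ≤ g w' := ih w' hw'v (le_of_eq hw')
        have hw'w : w' ≤ w := hcase.le
        have hcond : R * (w - w') ≤ C * (w' + w) := by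
          have hwle : w ≤ β * w' := by
            rw [hw', ← mul_assoc, ← pow_succ']
            exact h2
          have hthis : β * w' = w' + (C/R)*w' := by rw [hβ]; ring
          have h3 : w - w' ≤ (C/R) * w' := by linarith [hwle, hthis]
          have h4 : R * (w - w') ≤ C * w' := by
            have h5 := mul_le_mul_of_nonneg_left h3 hRpos.le
            calc R * (w - w') ≤ R * ((C/R)*w') := h5
              _ = C * w' := by field_simp
          nlinarith [hw'v, hv]
        have hAB : Real.sqrt (A*B) * (w - w') ≤ C*(w'+w) := by rwa [← hR]
        exact le_trans hgw' (aux_one_step g A B C hA hB hC hstep w' w (by linarith) hw'w hAB)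
  obtain ⟨n, hn⟩ := pow_unbounded_of_one_lt (w/v) hβ1
  have : w < β^n * v := by rwa [div_lt_iff₀ hv] at hn
  exact claim n w hvw this.le

lemma aux_step_mtp2 (M : ℕ) (K : Matrix (Fin M) (Fin M) ℝ)
    (μ : Fin M → ℝ) (g : ℝ → ℝ)
    (p : (Fin M → ℝ) → ℝ)
    (hp : ∀ x, p x = g ((x - μ) ⬝ᵥ (K *ᵥ (x - μ))))
    (hgnonneg : ∀ t, 0 ≤ g t)
    (hmtp2 : ∀ x y : Fin M → ℝ, p x * p y ≤ p (x ⊓ y) * p (x ⊔ y))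
    (i j : Fin M) (hij : i ≠ j) (hsym : K j i = K i j)
    (s t : ℝ) (hs : 0 ≤ s) (ht : 0 ≤ t) :
    g (s^2*K i i + t^2*K j j - 2*(s*t*K i j)) ≤ g (s^2*K i i + t^2*K j j + 2*(s*t*K i j)) := by
  obtain ⟨v, hv⟩ : ∃ v : Fin M → ℝ, v = (Pi.single i s : Fin M → ℝ) - Pi.single j t := ⟨_, rfl⟩
  obtain ⟨w, hw⟩ : ∃ w : Fin M → ℝ, w = (Pi.single i s : Fin M → ℝ) + Pi.single j t := ⟨_, rfl⟩
  have hinf : (μ + v) ⊓ (μ - v) = μ - w := by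
    funext k
    simp only [Pi.inf_apply, Pi.add_apply, Pi.sub_apply, hv, hw, Pi.single_apply]
    rcases eq_or_ne k i with rfl | hki
    · rw [if_pos rfl, if_neg hij]
      simp only [sub_zero, add_zero]
      rw [min_eq_right (by linarith)]
    · rcases eq_or_ne k j with rfl | hkj
      · rw [if_neg hki, if_pos rfl]
        simp only [zero_sub, zero_add]
        rw [min_eq_left (by linarith)]
        ring
      · rw [if_neg hki, if_neg hkj]
        simp
  have hsup : (μ + v) ⊔ (μ - v) = μ + w := by
    funext k
    simp only [Pi.sup_apply, Pi.add_apply, Pi.sub_apply, hv, hw, Pi.single_apply]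
    rcases eq_or_ne k i with rfl | hki
    · rw [if_pos rfl, if_neg hij]
      simp only [sub_zero, add_zero]
      rw [max_eq_left (by linarith)]
    · rcases eq_or_ne k j with rfl | hkj
      · rw [if_neg hki, if_pos rfl]
        simp only [zero_sub, zero_add]
        rw [max_eq_right (by linarith)]
        ring
      · rw [if_neg hki, if_neg hkj]
        simp
  have hQv : v ⬝ᵥ (K *ᵥ v) = s^2*K i i + t^2*K j j - 2*(s*t*K i j) := by
    rw [hv]
    simp only [Matrix.mulVec_sub, Matrix.mulVec_single,
      sub_dotProduct, dotProduct_sub,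
      single_dotProduct, Pi.sub_apply, Pi.smul_apply, op_smul_eq_mul, Matrix.col_apply]
    linear_combination (-(s*t)) * hsym
  have hQw : w ⬝ᵥ (K *ᵥ w) = s^2*K i i + t^2*K j j + 2*(s*t*K i j) := by
    rw [hw]
    simp only [Matrix.mulVec_add, Matrix.mulVec_single,
      add_dotProduct, dotProduct_add,
      single_dotProduct, Pi.add_apply, Pi.smul_apply, op_smul_eq_mul, Matrix.col_apply]
    linear_combination (s*t) * hsym
  have hQnv : (-v) ⬝ᵥ (K *ᵥ (-v)) = v ⬝ᵥ (K *ᵥ v) := by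
    simp [Matrix.mulVec_neg]
  have hQnw : (-w) ⬝ᵥ (K *ᵥ (-w)) = w ⬝ᵥ (K *ᵥ w) := by
    simp [Matrix.mulVec_neg]
  have hx := hmtp2 (μ + v) (μ - v)
  rw [hinf, hsup, hp (μ + v), hp (μ - v), hp (μ - w), hp (μ + w)] at hx
  rw [add_sub_cancel_left, sub_sub_cancel_left, sub_sub_cancel_left, add_sub_cancel_left] at hx
  rw [hQnv, hQnw, hQv, hQw] at hx
  nlinarith [hgnonneg (s^2*K i i + t^2*K j j - 2*(s*t*K i j)),
    hgnonneg (s^2*K i i + t^2*K j j + 2*(s*t*K i j)), hx]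

theorem stmt_1 (M : ℕ) (Sig : Matrix (Fin M) (Fin M) ℝ) (hSig : Sig.PosDef)
    (μ : Fin M → ℝ) (g : ℝ → ℝ) (hg : Differentiable ℝ g)
    (hgnonneg : ∀ t, 0 ≤ g t)
    (p : (Fin M → ℝ) → ℝ)
    (hp : ∀ x, p x = g ((x - μ) ⬝ᵥ (Sig⁻¹ *ᵥ (x - μ))))
    (hint : ∫ x, p x = 1)
    (hmtp2 : ∀ x y : Fin M → ℝ, p x * p y ≤ p (x ⊓ y) * p (x ⊔ y)) :
    ∀ i j, i ≠ j → Sig⁻¹ i j ≤ 0 := by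
  intro i j hij
  by_contra hpos
  push_neg at hpos
  have hK : (Sig⁻¹).PosDef := hSig.inv
  have hsym : Sig⁻¹ j i = Sig⁻¹ i j := by
    have h := hK.1
    conv_lhs => rw [← h]
    simp [Matrix.conjTranspose_apply]
  have hQpos : ∀ z : Fin M → ℝ, z ≠ 0 → 0 < z ⬝ᵥ (Sig⁻¹ *ᵥ z) := by
    intro z hz
    have := hK.dotProduct_mulVec_pos hz
    simpa using this
  have hsingle_ne : ∀ (k : Fin M), (Pi.single k 1 : Fin M → ℝ) ≠ 0 := by
    intro k h
    have := congrFun h k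
    simp at this
  have hii : 0 < Sig⁻¹ i i := by
    have := hQpos (Pi.single i 1) (hsingle_ne i)
    simpa using this
  have hjj : 0 < Sig⁻¹ j j := by
    have := hQpos (Pi.single j 1) (hsingle_ne j)
    simpa using this
  have hmono : ∀ v w : ℝ, 0 < v → v ≤ w → g v ≤ g w :=
    fun v w hv hvw => aux_mono g (Sig⁻¹ i i) (Sig⁻¹ j j) (Sig⁻¹ i j) hii hjj hpos
      (fun s t hs ht => aux_step_mtp2 M Sig⁻¹ μ g p hp hgnonneg hmtp2 i j hij hsym s t hs ht)
      v w hv hvw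
  have hcontQ : Continuous fun z : Fin M → ℝ => z ⬝ᵥ (Sig⁻¹ *ᵥ z) := by
    simp only [dotProduct, Matrix.mulVec]
    exact continuous_finset_sum _ fun k _ => (continuous_apply k).mul
      (continuous_finset_sum _ fun l _ => continuous_const.mul (continuous_apply l))
  have hcont : Continuous fun x : Fin M → ℝ => (x - μ) ⬝ᵥ (Sig⁻¹ *ᵥ (x - μ)) :=
    hcontQ.comp (continuous_id.sub continuous_const)
  have hhom : ∀ (r : ℝ) (z : Fin M → ℝ),
      (r • z) ⬝ᵥ (Sig⁻¹ *ᵥ (r • z)) = r^2 * (z ⬝ᵥ (Sig⁻¹ *ᵥ z)) := by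
    intro r z
    rw [Matrix.mulVec_smul, smul_dotProduct, dotProduct_smul, smul_eq_mul, smul_eq_mul]
    ring
  -- minimum of the quadratic form on the unit sphere
  have hsph : (Metric.sphere (0 : Fin M → ℝ) 1).Nonempty := by
    refine ⟨Pi.single i 1, ?_⟩
    simp [Pi.norm_single]
  obtain ⟨z0, hz0mem, hz0min⟩ := (isCompact_sphere (0 : Fin M → ℝ) 1).exists_isMinOn hsph
    hcontQ.continuousOn
  have hz0ne : z0 ≠ 0 := by
    intro h
    rw [h] at hz0mem
    simp at hz0mem
  obtain ⟨c, hc⟩ : ∃ c : ℝ, c = z0 ⬝ᵥ (Sig⁻¹ *ᵥ z0) := ⟨_, rfl⟩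
  have hcpos : 0 < c := hc ▸ hQpos z0 hz0ne
  have hlb : ∀ z : Fin M → ℝ, c * ‖z‖^2 ≤ z ⬝ᵥ (Sig⁻¹ *ᵥ z) := by
    intro z
    rcases eq_or_ne z 0 with rfl | hz
    · simp
    · have hnz : 0 < ‖z‖ := norm_pos_iff.2 hz
      have hmem : (‖z‖⁻¹ • z) ∈ Metric.sphere (0 : Fin M → ℝ) 1 := by
        simp [norm_smul, abs_of_pos (inv_pos.2 hnz), inv_mul_cancel₀ hnz.ne']
      have hmin := hz0min hmem
      have heq : z = ‖z‖ • (‖z‖⁻¹ • z) := by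
        rw [smul_smul, mul_inv_cancel₀ hnz.ne', one_smul]
      calc c * ‖z‖^2 ≤ ((‖z‖⁻¹ • z) ⬝ᵥ (Sig⁻¹ *ᵥ (‖z‖⁻¹ • z))) * ‖z‖^2 := by
            have : c ≤ (‖z‖⁻¹ • z) ⬝ᵥ (Sig⁻¹ *ᵥ (‖z‖⁻¹ • z)) := hc ▸ hmin
            nlinarith [sq_nonneg ‖z‖]
        _ = z ⬝ᵥ (Sig⁻¹ *ᵥ z) := by
            conv_rhs => rw [heq, hhom]
            ring
  by_cases hall : ∀ u : ℝ, 0 < u → g u = 0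
  · -- then p is a.e. zero, contradicting the integral being 1
    have hsub : {x | p x ≠ 0} ⊆ {μ} := by
      intro x hx
      simp only [Set.mem_setOf_eq] at hx
      by_contra hxμ
      have hxne : x ≠ μ := by simpa using hxμ
      have hne : x - μ ≠ 0 := sub_ne_zero_of_ne hxne
      exact hx (by rw [hp x]; exact hall _ (hQpos _ hne))
    have hμ0 : volume ({μ} : Set (Fin M → ℝ)) = 0 := by
      have hset : ({μ} : Set (Fin M → ℝ)) = Set.pi Set.univ (fun k => {μ k}) := by
        ext x
        simp [Set.mem_pi, funext_iff]
      rw [hset, volume_pi_pi]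
      exact Finset.prod_eq_zero (Finset.mem_univ i) Real.volume_singleton
    have hae : p =ᵐ[volume] 0 := by
      have h0 : ∀ᵐ x ∂(volume : Measure (Fin M → ℝ)), p x = 0 :=
        ae_iff.2 (measure_mono_null hsub hμ0)
      filter_upwards [h0] with x hx
      simp [hx]
    rw [integral_congr_ae hae] at hint
    simp at hint
  · push_neg at hall
    obtain ⟨t₀, ht₀pos, ht₀ne⟩ := hall
    have hδ : 0 < g t₀ := (hgnonneg t₀).lt_of_ne (Ne.symm ht₀ne)
    obtain ⟨S, hS⟩ : ∃ S : Set (Fin M → ℝ),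
        S = {x | t₀ ≤ (x - μ) ⬝ᵥ (Sig⁻¹ *ᵥ (x - μ))} := ⟨_, rfl⟩
    have hSmeas : MeasurableSet S := by
      rw [hS]
      exact measurableSet_le measurable_const hcont.measurable
    have hSsub : Sᶜ ⊆ Metric.closedBall μ (Real.sqrt (t₀/c)) := by
      intro x hx
      rw [hS] at hx
      simp only [Set.mem_compl_iff, Set.mem_setOf_eq, not_le] at hx
      rw [Metric.mem_closedBall, dist_eq_norm]
      by_contra hfar
      push_neg at hfar
      have hR0 : 0 ≤ Real.sqrt (t₀/c) := Real.sqrt_nonneg _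
      have hsq : t₀/c < ‖x - μ‖^2 := by
        have h2 := Real.sq_sqrt (le_of_lt (div_pos ht₀pos hcpos))
        nlinarith [hfar, hR0]
      have := hlb (x - μ)
      have ht₀lt : t₀ < c * ‖x - μ‖^2 := by
        rw [div_lt_iff₀ hcpos] at hsq
        linarith [hsq]
      linarith
    have hcompl_fin : volume Sᶜ < ⊤ :=
      lt_of_le_of_lt (measure_mono hSsub) measure_closedBall_lt_top
    have huniv : volume (Set.univ : Set (Fin M → ℝ)) = ⊤ := by
      rw [← Set.pi_univ Set.univ, volume_pi_pi]
      simp only [Real.volume_univ, Finset.prod_const]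
      exact ENNReal.top_pow (by simpa using (Fin.pos_iff_nonempty.2 ⟨i⟩).ne')
    have hSvol : volume S = ⊤ := by
      by_contra h
      have h1 : volume (S ∪ Sᶜ) ≤ volume S + volume Sᶜ := measure_union_le S Sᶜ
      rw [Set.union_compl_self, huniv] at h1
      have h2 : volume S + volume Sᶜ < ⊤ :=
        ENNReal.add_lt_top.2 ⟨lt_top_iff_ne_top.2 h, hcompl_fin⟩
      exact absurd (lt_of_le_of_lt h1 h2) (lt_irrefl ⊤)
    have hnotint : ¬ Integrable p volume := by
      intro hI
      have hfin := hI.2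
      rw [MeasureTheory.HasFiniteIntegral] at hfin
      have hge : ∀ x, S.indicator (fun _ => ENNReal.ofReal (g t₀)) x ≤ (‖p x‖₊ : ENNReal) := by
        intro x
        by_cases hx : x ∈ S
        · rw [Set.indicator_of_mem hx]
          have h1 : g t₀ ≤ p x := by
            rw [hp x]
            rw [hS] at hx
            exact hmono t₀ _ ht₀pos hx
          calc ENNReal.ofReal (g t₀) ≤ ENNReal.ofReal (p x) := ENNReal.ofReal_le_ofReal h1
            _ = ‖p x‖₊ := by
                rw [← enorm_eq_nnnorm, Real.enorm_eq_ofReal (le_trans hδ.le h1)]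
        · simp [Set.indicator_of_notMem hx]
      have hle : (∫⁻ x, S.indicator (fun _ => ENNReal.ofReal (g t₀)) x) ≤
          ∫⁻ x, (‖p x‖₊ : ENNReal) := lintegral_mono hge
      rw [lintegral_indicator_const hSmeas, hSvol, ENNReal.mul_top
        (by simpa using hδ : ENNReal.ofReal (g t₀) ≠ 0)] at hle
      exact absurd (lt_of_le_of_lt hle hfin) (lt_irrefl ⊤)
    rw [integral_undef hnotint] at hint
    exact one_ne_zero hint.symm
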